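/- Let μ ≥ 0, δ ∈ (0,1), and let N be a Poisson random variable with mean μ. Define Ū₊(μ,δ) := μ + (14/3)·log(1/δ) + 2·√(2·μ·log(1/δ)) and Ū₋(μ,δ) := max{0, μ − 2·√(2·μ·log(1/δ))}. Then with probability at least 1 − 2δ, the chain of inequalities Ū₋(μ,δ) ≤ U₋(N,δ) ≤ μ ≤ U₊(N,δ) ≤ Ū₊(μ,δ) holds. -/

import Mathlib

open MeasureTheory ProbabilityTheory Real
open scoped NNReal ENNReal

/-- Upper confidence bound: `U₊(N,δ) = 2·log(1/δ) + N + √(2·N·log(1/δ))`. -/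
noncomputable def Uplus (N δ : ℝ) : ℝ :=
  2 * Real.log (1 / δ) + N + Real.sqrt (2 * N * Real.log (1 / δ))

/-- Lower confidence bound: `U₋(N,δ) = max{0, N − √(2·N·log(1/δ))}`. -/
noncomputable def Uminus (N δ : ℝ) : ℝ :=
  max 0 (N - Real.sqrt (2 * N * Real.log (1 / δ)))

/-- Deterministic upper envelope: `Ū₊(μ,δ) = μ + (14/3)·log(1/δ) + 2·√(2·μ·log(1/δ))`. -/
noncomputable def UbarPlus (μ δ : ℝ) : ℝ :=
  μ + (14 / 3) * Real.log (1 / δ) + 2 * Real.sqrt (2 * μ * Real.log (1 / δ))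

/-- Deterministic lower envelope: `Ū₋(μ,δ) = max{0, μ − 2·√(2·μ·log(1/δ))}`. -/
noncomputable def UbarMinus (μ δ : ℝ) : ℝ :=
  max 0 (μ - 2 * Real.sqrt (2 * μ * Real.log (1 / δ)))

open scoped Nat

/- ### Auxiliary analytic lemmas -/

lemma aux_exp_hasSum (x : ℝ) : HasSum (fun n : ℕ => x ^ n / n !) (Real.exp x) := by
  rw [Real.exp_eq_exp_ℝ]
  exact NormedSpace.expSeries_div_hasSum_exp x

lemma aux_fact_ge (n : ℕ) : (2 : ℝ) * 3 ^ n ≤ (n + 2)! := by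
  induction n with
  | zero => norm_num
  | succ k ih =>
      have h : ((k + 3)! : ℝ) = (k + 3) * (k + 2)! := by
        rw [show k + 3 = (k + 2) + 1 from rfl, Nat.factorial_succ]; push_cast; ring
      rw [show k + 1 + 2 = k + 3 from rfl, h]
      have h3 : (3 : ℝ) ≤ (k : ℝ) + 3 := by
        have : (0:ℝ) ≤ (k:ℝ) := Nat.cast_nonneg k
        linarith
      have hfn : (0:ℝ) ≤ ((k+2)! : ℝ) := Nat.cast_nonneg _
      calc (2:ℝ) * 3 ^ (k+1) = 3 * (2 * 3 ^ k) := by ring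
        _ ≤ 3 * (k+2)! := by linarith [mul_le_mul_of_nonneg_left ih (by norm_num : (0:ℝ) ≤ 3)]
        _ ≤ ((k:ℝ)+3) * (k+2)! := mul_le_mul_of_nonneg_right h3 hfn

/-- Bernstein-type bound on exp. -/
lemma aux_exp_le_bernstein {t : ℝ} (ht : 0 ≤ t) (ht3 : t < 3) :
    Real.exp t ≤ 1 + t + t ^ 2 / (2 * (1 - t / 3)) := by
  have h1 : HasSum (fun n : ℕ => t ^ (n + 2) / (n + 2)!) (Real.exp t - (1 + t)) := by
    have := (hasSum_nat_add_iff' (f := fun n : ℕ => t ^ n / n !) 2).mpr (aux_exp_hasSum t)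
    simpa [Finset.sum_range_succ] using this
  have hr : t / 3 < 1 := by linarith
  have hr0 : 0 ≤ t / 3 := by linarith
  have h2 : HasSum (fun n : ℕ => t ^ 2 / 2 * (t / 3) ^ n) (t ^ 2 / 2 * (1 - t / 3)⁻¹) :=
    (hasSum_geometric_of_lt_one hr0 hr).mul_left _
  have hle : Real.exp t - (1 + t) ≤ t ^ 2 / 2 * (1 - t / 3)⁻¹ := by
    refine hasSum_le (fun n => ?_) h1 h2
    have hf : (2:ℝ) * 3 ^ n ≤ (n + 2)! := aux_fact_ge n
    have hfp : (0:ℝ) < (n + 2)! := Nat.cast_pos.mpr (Nat.factorial_pos _)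
    have hpow : t ^ (n + 2) = t ^ 2 * t ^ n := by ring
    rw [hpow, div_eq_mul_inv]
    have h3 : (0:ℝ) < 2 * 3 ^ n := by positivity
    have hinv : ((n + 2)! : ℝ)⁻¹ ≤ (2 * 3 ^ n)⁻¹ := inv_anti₀ h3 hf
    calc t ^ 2 * t ^ n * ((n + 2)! : ℝ)⁻¹ ≤ t ^ 2 * t ^ n * (2 * 3 ^ n)⁻¹ := by
          apply mul_le_mul_of_nonneg_left hinv; positivity
      _ = t ^ 2 / 2 * (t / 3) ^ n := by
          rw [div_pow]; field_simp
  have heq : t ^ 2 / (2 * (1 - t / 3)) = t ^ 2 / 2 * (1 - t / 3)⁻¹ := by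
    rw [div_mul_eq_div_div, div_eq_mul_inv (t^2/2)]
  linarith [hle, heq ▸ hle]

/-- Quadratic upper bound on exp(-s). -/
lemma aux_exp_neg_le {s : ℝ} (hs : 0 ≤ s) : Real.exp (-s) ≤ 1 - s + s ^ 2 / 2 := by
  have h := Real.sum_le_exp_of_nonneg hs 3
  have h' : 1 + s + s ^ 2 / 2 ≤ Real.exp s := by
    simpa [Finset.sum_range_succ, pow_succ] using h
  have hpos : (0:ℝ) < 1 + s + s ^ 2 / 2 := by positivity
  rw [Real.exp_neg s]
  have h2 : (Real.exp s)⁻¹ ≤ (1 + s + s ^ 2 / 2)⁻¹ := inv_anti₀ hpos h'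
  refine h2.trans ?_
  rw [inv_le_iff_one_le_mul₀ hpos]
  nlinarith [sq_nonneg s, sq_nonneg (s^2)]

lemma aux_poissonMeasure_eq (μ : ℝ≥0) : poissonMeasure μ = (poissonPMF μ).toMeasure := by
  refine Measure.ext_iff_singleton.mpr fun n => ?_
  rw [poissonMeasure_singleton, PMF.toMeasure_apply_singleton _ _ (measurableSet_singleton _)]
  rfl

/- ### MGF and Chernoff bound for the Poisson measure -/

lemma aux_poisson_mgf (μ : ℝ≥0) (t : ℝ) :
    HasSum (fun n : ℕ => Real.exp (t * n) * poissonPMFReal μ n)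
      (Real.exp ((μ : ℝ) * (Real.exp t - 1))) := by
  have h := (aux_exp_hasSum ((μ : ℝ) * Real.exp t)).mul_left (Real.exp (-(μ : ℝ)))
  have heq : (fun n : ℕ => Real.exp (-(μ:ℝ)) * (((μ:ℝ) * Real.exp t) ^ n / n !)) =
      fun n : ℕ => Real.exp (t * n) * poissonPMFReal μ n := by
    funext n
    unfold poissonPMFReal
    rw [mul_pow, ← Real.exp_nat_mul, mul_comm (n:ℝ) t]
    ring
  have h2 : Real.exp (-(μ:ℝ)) * Real.exp ((μ:ℝ) * Real.exp t) =
      Real.exp ((μ:ℝ) * (Real.exp t - 1)) := by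
    rw [← Real.exp_add]; ring_nf
  rw [h2] at h
  exact heq ▸ h

lemma aux_poisson_chernoff (μ : ℝ≥0) (t c : ℝ) (S : Set ℕ) (hS : ∀ n ∈ S, t * c ≤ t * n) :
    poissonMeasure μ S ≤ ENNReal.ofReal (Real.exp ((μ:ℝ) * (Real.exp t - 1) - t * c)) := by
  have hmeas : MeasurableSet S := S.to_countable.measurableSet
  rw [aux_poissonMeasure_eq, PMF.toMeasure_apply _ hmeas]
  have key : ∀ n : ℕ, S.indicator (⇑(poissonPMF μ)) n ≤
      ENNReal.ofReal (Real.exp (t * n - t * c) * poissonPMFReal μ n) := by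
    intro n
    by_cases hn : n ∈ S
    · rw [Set.indicator_of_mem hn]
      have h1 : (1:ℝ) ≤ Real.exp (t * n - t * c) := by
        rw [show (1:ℝ) = Real.exp 0 from (Real.exp_zero).symm]
        exact Real.exp_le_exp.mpr (by linarith [hS n hn])
      have hle : poissonPMFReal μ n ≤ Real.exp (t*n - t*c) * poissonPMFReal μ n :=
        le_mul_of_one_le_left poissonPMFReal_nonneg h1
      calc (poissonPMF μ) n = ENNReal.ofReal (poissonPMFReal μ n) := rfl
        _ ≤ _ := ENNReal.ofReal_le_ofReal hle
    · rw [Set.indicator_of_notMem hn]; exact zero_le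
  refine (ENNReal.tsum_le_tsum key).trans ?_
  have hsum : HasSum (fun n : ℕ => Real.exp (t*(n:ℝ) - t*c) * poissonPMFReal μ n)
      (Real.exp ((μ:ℝ)*(Real.exp t - 1) - t*c)) := by
    have h := (aux_poisson_mgf μ t).mul_left (Real.exp (-(t*c)))
    have heq : (fun n : ℕ => Real.exp (-(t*c)) * (Real.exp (t*n) * poissonPMFReal μ n))
        = fun n : ℕ => Real.exp (t*(n:ℝ) - t*c) * poissonPMFReal μ n := by
      funext n; rw [← mul_assoc, ← Real.exp_add]; ring_nf
    have h2 : Real.exp (-(t*c)) * Real.exp ((μ:ℝ)*(Real.exp t - 1))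
        = Real.exp ((μ:ℝ)*(Real.exp t - 1) - t*c) := by
      rw [← Real.exp_add]; ring_nf
    rw [h2] at h
    exact heq ▸ h
  have hnn : ∀ n : ℕ, 0 ≤ Real.exp (t*(n:ℝ) - t*c) * poissonPMFReal μ n := fun n =>
    mul_nonneg (Real.exp_nonneg _) poissonPMFReal_nonneg
  rw [← ENNReal.ofReal_tsum_of_nonneg hnn hsum.summable, hsum.tsum_eq]

/- ### Deterministic sandwich -/

lemma aux_det_sandwich {m ℓ n : ℝ} (hm : 0 ≤ m) (hn : 0 ≤ n) (hℓ : 0 < ℓ)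
    (h1 : m - Real.sqrt (2*m*ℓ) ≤ n) (h2 : n ≤ m + ℓ + Real.sqrt (2*m*ℓ)) :
    max 0 (m - 2 * Real.sqrt (2*m*ℓ)) ≤ max 0 (n - Real.sqrt (2*n*ℓ)) ∧
    max 0 (n - Real.sqrt (2*n*ℓ)) ≤ m ∧
    m ≤ 2*ℓ + n + Real.sqrt (2*n*ℓ) ∧
    2*ℓ + n + Real.sqrt (2*n*ℓ) ≤ m + (14/3)*ℓ + 2 * Real.sqrt (2*m*ℓ) := by
  set A := Real.sqrt (2*m*ℓ) with hAdef
  set B := Real.sqrt (2*n*ℓ) with hBdef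
  have hA : 0 ≤ A := Real.sqrt_nonneg _
  have hB : 0 ≤ B := Real.sqrt_nonneg _
  have hA2 : A^2 = 2*m*ℓ := Real.sq_sqrt (by positivity)
  have hB2 : B^2 = 2*n*ℓ := Real.sq_sqrt (by positivity)
  refine ⟨?_, ?_, ?_, ?_⟩
  · rcases le_or_gt (m - 2*A) 0 with h | h
    · rw [max_eq_left h]; exact le_max_left _ _
    · have hApos : 0 < A := by
        by_contra hc
        push_neg at hc
        have : A = 0 := le_antisymm hc hA
        nlinarith [hA2]
      have hA4 : 4*ℓ < A := by nlinarith [hA2]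
      have key : B ≤ n - m + 2*A := by
        by_contra hc
        push_neg at hc
        nlinarith [hB2, hA2, sq_nonneg (n - m + A)]
      have : m - 2*A ≤ n - B := by linarith
      exact max_le (le_max_left _ _) (le_trans this (le_max_right _ _))
  · refine max_le hm ?_
    rcases le_or_gt n m with h | h
    · linarith
    · have key : n - m ≤ B := by
        rcases le_or_gt (n - m) ℓ with hd | hd
        · by_contra hc; push_neg at hc
          nlinarith [hB2]
        · by_contra hc; push_neg at hc
          nlinarith [hB2, hA2, sq_nonneg (n - m - ℓ)]
      linarith
  · rcases le_or_gt m n with h | h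
    · linarith
    · have key : A ≤ B + 2*ℓ := by
        by_contra hc; push_neg at hc
        nlinarith [hA2, hB2, mul_nonneg hB hℓ.le]
      linarith
  · have key : B ≤ A + (3/2)*ℓ := by
      by_contra hc; push_neg at hc
      nlinarith [hA2, hB2, mul_nonneg hA hℓ.le]
    linarith

/- ### Main theorem -/

/-- If `N ~ Poisson(μ)` with `μ ≥ 0` and `δ ∈ (0,1)`, then with probability at least
`1 − 2δ` one has `Ū₋(μ,δ) ≤ U₋(N,δ) ≤ μ ≤ U₊(N,δ) ≤ Ū₊(μ,δ)`. -/
theorem poisson_confidence_sandwich (μ : ℝ≥0) (δ : ℝ) (hδ : δ ∈ Set.Ioo (0 : ℝ) 1) :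
    ENNReal.ofReal (1 - 2 * δ) ≤
      poissonMeasure μ {n : ℕ |
        UbarMinus (μ : ℝ) δ ≤ Uminus (n : ℝ) δ ∧ Uminus (n : ℝ) δ ≤ (μ : ℝ) ∧
        (μ : ℝ) ≤ Uplus (n : ℝ) δ ∧ Uplus (n : ℝ) δ ≤ UbarPlus (μ : ℝ) δ} := by
  obtain ⟨hδ0, hδ1⟩ := hδ
  set m := (μ : ℝ) with hmdef
  set ℓ := Real.log (1/δ) with hℓdef
  have hℓ : 0 < ℓ := Real.log_pos (by rw [lt_div_iff₀ hδ0]; linarith)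
  have hm : 0 ≤ m := μ.coe_nonneg
  set A := Real.sqrt (2*m*ℓ) with hAdef
  have hA : 0 ≤ A := Real.sqrt_nonneg _
  have hA2 : A^2 = 2*m*ℓ := Real.sq_sqrt (by positivity)
  have hexplog : Real.exp (-ℓ) = δ := by
    rw [hℓdef, one_div, Real.log_inv, neg_neg, Real.exp_log hδ0]
  -- Lower tail bound
  have hB1 : poissonMeasure μ {n : ℕ | (n:ℝ) < m - A} ≤ ENNReal.ofReal δ := by
    rcases eq_or_lt_of_le hm with hm0 | hmpos
    · have hA0 : A = 0 := by
        have h20 : 2*m*ℓ = 0 := by rw [← hm0]; ring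
        rw [hAdef, h20, Real.sqrt_zero]
      have hempty : {n : ℕ | (n:ℝ) < m - A} = ∅ := by
        refine Set.eq_empty_iff_forall_notMem.mpr fun n hn => ?_
        have hlt : (n:ℝ) < m - A := hn
        have hge : (0:ℝ) ≤ (n:ℝ) := Nat.cast_nonneg n
        rw [← hm0, hA0] at hlt
        linarith
      rw [hempty, measure_empty]
      exact zero_le
    · obtain ⟨s, hsdef⟩ : ∃ s : ℝ, s = A / m := ⟨_, rfl⟩
      have hs : 0 ≤ s := hsdef ▸ div_nonneg hA hm
      have hsm : s * m = A := by rw [hsdef]; field_simp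
      have hsA : s * A = 2*ℓ := by
        rw [hsdef, div_mul_eq_mul_div, div_eq_iff hmpos.ne']
        nlinarith [hA2]
      have hch := aux_poisson_chernoff μ (-s) (m - A) {n : ℕ | (n:ℝ) < m - A} ?_
      · refine hch.trans (ENNReal.ofReal_le_ofReal ?_)
        have hexp := aux_exp_neg_le hs
        have k1 : m * Real.exp (-s) ≤ m * (1 - s + s^2/2) :=
          mul_le_mul_of_nonneg_left hexp hm
        have k1' : m * (1 - s + s^2/2) = m - s*m + (s^2*m)/2 := by ring
        have k4 : s^2 * m = 2*ℓ := by
          calc s^2 * m = s * (s * m) := by ring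
            _ = s * A := by rw [hsm]
            _ = 2*ℓ := hsA
        have g1 : m * (Real.exp (-s) - 1) - (-s) * (m - A)
            = m * Real.exp (-s) - m + s*m - s*A := by ring
        have hbound : m * (Real.exp (-s) - 1) - (-s) * (m - A) ≤ -ℓ := by
          rw [g1]
          linarith [k1, k1', hsm, hsA, k4]
        calc Real.exp (m*(Real.exp (-s) - 1) - (-s)*(m-A)) ≤ Real.exp (-ℓ) :=
              Real.exp_le_exp.mpr hbound
          _ = δ := hexplog
      · intro n hn
        have hlt : (n:ℝ) < m - A := hn
        exact mul_le_mul_of_nonpos_left hlt.le (neg_nonpos.mpr hs)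
  -- Upper tail bound
  have hB2 : poissonMeasure μ {n : ℕ | m + ℓ + A < (n:ℝ)} ≤ ENNReal.ofReal δ := by
    rcases eq_or_lt_of_le hm with hm0 | hmpos
    · have hsub0 : {n : ℕ | m + ℓ + A < (n:ℝ)} ⊆ ({0}ᶜ : Set ℕ) := by
        intro n hn
        simp only [Set.mem_compl_iff, Set.mem_singleton_iff]
        intro h0
        rw [h0] at hn
        have : m + ℓ + A < 0 := by simpa using hn
        nlinarith
      have hsingle : poissonMeasure μ {0} = 1 := by
        rw [aux_poissonMeasure_eq, PMF.toMeasure_apply_singleton _ _ (measurableSet_singleton 0)]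
        have : (poissonPMF μ) 0 = ENNReal.ofReal (poissonPMFReal μ 0) := rfl
        rw [this]
        unfold poissonPMFReal
        rw [show ((μ:ℝ)) = 0 from hm0.symm]
        norm_num
      have hc : poissonMeasure μ ({0}ᶜ : Set ℕ) = 0 := by
        rw [prob_compl_eq_one_sub (measurableSet_singleton 0), hsingle, tsub_self]
      exact ((measure_mono hsub0).trans hc.le).trans zero_le
    · obtain ⟨x, hxdef⟩ : ∃ x : ℝ, x = ℓ + A := ⟨_, rfl⟩
      have hx : 0 < x := by rw [hxdef]; positivity
      obtain ⟨q, hqdef⟩ : ∃ q : ℝ, q = m + x/3 := ⟨_, rfl⟩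
      have hq : 0 < q := by rw [hqdef]; positivity
      obtain ⟨t, htdef⟩ : ∃ t : ℝ, t = x / q := ⟨_, rfl⟩
      have ht : 0 < t := htdef ▸ div_pos hx hq
      have ht3 : t < 3 := by
        rw [htdef, div_lt_iff₀ hq]
        have h3q : 3 * q = 3*m + x := by rw [hqdef]; ring
        linarith
      have hbern := aux_exp_le_bernstein ht.le ht3
      have h13 : 1 - t/3 = m / q := by
        have hm' : m = q - x/3 := by rw [hqdef]; ring
        rw [htdef, hm']
        field_simp
      have hfrac : t^2/(2*(1 - t/3)) = x^2/(2*m*q) := by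
        rw [h13, htdef, div_pow]
        field_simp
      have hkey : m * (Real.exp t - 1) - t * (m + x) ≤ -ℓ := by
        have h1 : m * Real.exp t ≤ m * (1 + t + x^2/(2*m*q)) := by
          rw [← hfrac]; exact mul_le_mul_of_nonneg_left hbern hm
        have h2 : m * (1 + t + x^2/(2*m*q)) = m + t*m + x^2/(2*q) := by
          field_simp
        have h3 : t * x = x^2 / q := by rw [htdef]; field_simp
        have h5 : ℓ ≤ x^2/(2*q) := by
          rw [le_div_iff₀ (by positivity)]
          calc ℓ * (2*q) = 2*ℓ*m + (2/3)*ℓ*x := by rw [hqdef]; ring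
            _ = A^2 + (2/3)*ℓ*(ℓ + A) := by rw [hA2, hxdef]; ring
            _ ≤ ℓ^2 + 2*ℓ*A + A^2 := by nlinarith [mul_nonneg hℓ.le hA, sq_nonneg ℓ]
            _ = x^2 := by rw [hxdef]; ring
        have h6 : x^2/q = 2 * (x^2/(2*q)) := by ring
        have g1 : m * (Real.exp t - 1) - t * (m + x)
            = m * Real.exp t - m - t*m - t*x := by ring
        rw [g1]
        linarith [h1, h2, h3, h5, h6]
      have hch := aux_poisson_chernoff μ t (m + x) {n : ℕ | m + ℓ + A < (n:ℝ)} ?_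
      · refine hch.trans (ENNReal.ofReal_le_ofReal ?_)
        calc Real.exp (m*(Real.exp t - 1) - t*(m+x)) ≤ Real.exp (-ℓ) :=
              Real.exp_le_exp.mpr hkey
          _ = δ := hexplog
      · intro n hn
        have hlt : m + ℓ + A < (n:ℝ) := hn
        have : m + x ≤ (n:ℝ) := by rw [hxdef]; linarith
        exact mul_le_mul_of_nonneg_left this ht.le
  -- Good event and inclusion
  set G : Set ℕ := {n : ℕ | m - A ≤ (n:ℝ) ∧ (n:ℝ) ≤ m + ℓ + A} with hGdef
  have hsub : G ⊆ {n : ℕ |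
      UbarMinus m δ ≤ Uminus (n : ℝ) δ ∧ Uminus (n : ℝ) δ ≤ m ∧
      m ≤ Uplus (n : ℝ) δ ∧ Uplus (n : ℝ) δ ≤ UbarPlus m δ} := by
    intro n hn
    obtain ⟨h1, h2⟩ := hn
    have hd := aux_det_sandwich hm (Nat.cast_nonneg (α := ℝ) n) hℓ h1 h2
    simp only [Set.mem_setOf_eq, Uplus, Uminus, UbarPlus, UbarMinus, ← hℓdef, ← hAdef]
    exact ⟨hd.1, hd.2.1, hd.2.2.1, hd.2.2.2⟩
  have hunion : Gᶜ ⊆ {n : ℕ | (n:ℝ) < m - A} ∪ {n : ℕ | m + ℓ + A < (n:ℝ)} := by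
    intro n hn
    simp only [Set.mem_compl_iff, hGdef, Set.mem_setOf_eq, not_and_or, not_le] at hn
    exact hn
  have hGc : poissonMeasure μ Gᶜ ≤ ENNReal.ofReal (2*δ) := by
    refine (measure_mono hunion).trans ((measure_union_le _ _).trans ?_)
    rw [show (2:ℝ)*δ = δ + δ by ring, ENNReal.ofReal_add hδ0.le hδ0.le]
    exact add_le_add hB1 hB2
  have hGmeas : MeasurableSet G := G.to_countable.measurableSet
  have hPG : ENNReal.ofReal (1 - 2*δ) ≤ poissonMeasure μ G := by
    have h1 : poissonMeasure μ Gᶜ = 1 - poissonMeasure μ G := prob_compl_eq_one_sub hGmeas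
    have h2 : poissonMeasure μ G = 1 - poissonMeasure μ Gᶜ := by
      rw [h1, ENNReal.sub_sub_cancel ENNReal.one_ne_top prob_le_one]
    rw [h2]
    calc ENNReal.ofReal (1 - 2*δ) = ENNReal.ofReal 1 - ENNReal.ofReal (2*δ) :=
          ENNReal.ofReal_sub _ (by linarith)
      _ = 1 - ENNReal.ofReal (2*δ) := by rw [ENNReal.ofReal_one]
      _ ≤ 1 - poissonMeasure μ Gᶜ := tsub_le_tsub_left hGc 1
  exact hPG.trans (measure_mono hsub)
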